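/- Let Θ : Ω → Ψ be measurable and {P_θ}_{θ∈Ψ} a disintegration of P over P_Θ consistent with Θ. Let I be countable, T countably generated, and {X_i}_{i∈I} measurable maps Ω → Y. Then {X_i}_{i∈I} is P-conditionally i.i.d. given Θ if and only if for P_Θ-almost all θ∈Ψ the family {X_i}_{i∈I} is i.i.d. under P_θ. -/

import Mathlib

open MeasureTheory Set

/-- Conditional independence of a family of measurable maps over a σ-algebra `F`. -/
def CondIndepFam {Ω Y I : Type*} [MeasurableSpace Ω] (mY : MeasurableSpace Y)
    (P : Measure Ω) (F : MeasurableSpace Ω) (X : I → Ω → Y) : Prop :=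
  ∀ (n : ℕ) (idx : Fin n → I), Function.Injective idx →
    ∀ E : Fin n → Set Ω,
      (∀ j, MeasurableSet[MeasurableSpace.comap (X (idx j)) mY] (E j)) →
      P[Set.indicator (⋂ j, E j) (fun _ => (1 : ℝ)) | F]
        =ᵐ[P] fun ω => ∏ j, (P[Set.indicator (E j) (fun _ => (1 : ℝ)) | F]) ω

lemma aux_countable_generatePiSystem {α : Type*} {S : Set (Set α)} (hS : S.Countable) :
    (generatePiSystem S).Countable := by
  have h : generatePiSystem S ⊆
      (fun T : Set (Set α) => ⋂₀ T) '' {T : Set (Set α) | T.Finite ∧ T ⊆ S} := by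
    intro t ht
    induction ht with
    | @base s h_s =>
      exact ⟨{s}, ⟨Set.finite_singleton _, Set.singleton_subset_iff.2 h_s⟩,
        Set.sInter_singleton s⟩
    | @inter s u hs hu hne ihs ihu =>
      obtain ⟨T1, ⟨hT1f, hT1s⟩, h1⟩ := ihs
      obtain ⟨T2, ⟨hT2f, hT2s⟩, h2⟩ := ihu
      exact ⟨T1 ∪ T2, ⟨hT1f.union hT2f, Set.union_subset hT1s hT2s⟩,
        by simp only []; rw [Set.sInter_union, ← h1, ← h2]⟩
  exact ((Set.countable_setOf_finite_subset hS).image _).mono h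

lemma aux_meas_inter_of_eq_one {Ω : Type*} [MeasurableSpace Ω] {μ : Measure Ω}
    [IsProbabilityMeasure μ] {s : Set Ω} (hs : MeasurableSet s) (h1 : μ s = 1) (t : Set Ω) :
    μ (s ∩ t) = μ t := by
  have hsc : μ sᶜ = 0 := by
    rw [measure_compl hs (measure_ne_top μ s), h1, measure_univ, tsub_self]
  refine le_antisymm (measure_mono inter_subset_right) ?_
  calc μ t ≤ μ ((s ∩ t) ∪ sᶜ) := measure_mono fun x hx => by
              by_cases h : x ∈ s
              exacts [Or.inl ⟨h, hx⟩, Or.inr h]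
    _ ≤ μ (s ∩ t) + μ sᶜ := measure_union_le _ _
    _ = μ (s ∩ t) := by rw [hsc, add_zero]

lemma aux_meas_compl_eq_zero {Ω : Type*} [MeasurableSpace Ω] {μ : Measure Ω}
    [IsProbabilityMeasure μ] {s : Set Ω} (hs : MeasurableSet s) (h1 : μ s = 1) :
    μ sᶜ = 0 := by
  rw [measure_compl hs (measure_ne_top μ s), h1, measure_univ, tsub_self]

section Disint

variable {Ω Ψ : Type*} [MeasurableSpace Ω] [mΨ : MeasurableSpace Ψ]

lemma aux_disint_setLIntegral (P : Measure Ω) [IsProbabilityMeasure P]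
    (Θ : Ω → Ψ) (hΘ : Measurable Θ)
    (Pd : Ψ → Measure Ω) (hPdprob : ∀ θ, IsProbabilityMeasure (Pd θ))
    (hPdint : ∀ D : Set Ω, MeasurableSet D → ∫⁻ θ, Pd θ D ∂(P.map Θ) = P D)
    (hPdcons : ∀ D : Set Ψ, MeasurableSet D →
      ∀ᵐ θ ∂(P.map Θ).restrict D, Pd θ (Θ ⁻¹' D) = 1)
    {A : Set Ψ} (hA : MeasurableSet A) {D : Set Ω} (hD : MeasurableSet D) :
    ∫⁻ θ in A, Pd θ D ∂(P.map Θ) = P (Θ ⁻¹' A ∩ D) := by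
  have hAm : MeasurableSet (Θ ⁻¹' A) := hΘ hA
  have key : ∫⁻ θ, Pd θ (Θ ⁻¹' A ∩ D) ∂(P.map Θ) = P (Θ ⁻¹' A ∩ D) :=
    hPdint _ (hAm.inter hD)
  have split : ∫⁻ θ, Pd θ (Θ ⁻¹' A ∩ D) ∂(P.map Θ)
      = ∫⁻ θ in A, Pd θ (Θ ⁻¹' A ∩ D) ∂(P.map Θ)
        + ∫⁻ θ in Aᶜ, Pd θ (Θ ⁻¹' A ∩ D) ∂(P.map Θ) :=
    (lintegral_add_compl _ hA).symm
  have h1 : ∫⁻ θ in A, Pd θ (Θ ⁻¹' A ∩ D) ∂(P.map Θ) = ∫⁻ θ in A, Pd θ D ∂(P.map Θ) := by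
    refine lintegral_congr_ae ?_
    filter_upwards [hPdcons A hA] with θ hθ
    haveI := hPdprob θ
    exact aux_meas_inter_of_eq_one hAm hθ D
  have h2 : ∫⁻ θ in Aᶜ, Pd θ (Θ ⁻¹' A ∩ D) ∂(P.map Θ) = 0 := by
    have hz : ∀ᵐ θ ∂(P.map Θ).restrict Aᶜ, Pd θ (Θ ⁻¹' A ∩ D) = 0 := by
      filter_upwards [hPdcons Aᶜ hA.compl] with θ hθ
      haveI := hPdprob θ
      have hc : Pd θ (Θ ⁻¹' A) = 0 := by
        have := aux_meas_compl_eq_zero (μ := Pd θ) (hΘ hA.compl) hθ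
        rwa [Set.preimage_compl, compl_compl] at this
      exact le_antisymm (le_trans (measure_mono Set.inter_subset_left) hc.le) zero_le
    calc ∫⁻ θ in Aᶜ, Pd θ (Θ ⁻¹' A ∩ D) ∂(P.map Θ)
        = ∫⁻ _ in Aᶜ, 0 ∂(P.map Θ) := lintegral_congr_ae hz
      _ = 0 := lintegral_zero
  rw [← h1, ← key, split, h2, add_zero]

end Disint

section Condexp

variable {Ω Ψ : Type*} [MeasurableSpace Ω] [mΨ : MeasurableSpace Ψ]

lemma aux_condexp_indicator_disint (P : Measure Ω) [IsProbabilityMeasure P]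
    (Θ : Ω → Ψ) (hΘ : Measurable Θ)
    (Pd : Ψ → Measure Ω) (hPdprob : ∀ θ, IsProbabilityMeasure (Pd θ))
    (hPdmeas : ∀ D : Set Ω, MeasurableSet D → Measurable fun θ => Pd θ D)
    (hPdint : ∀ D : Set Ω, MeasurableSet D → ∫⁻ θ, Pd θ D ∂(P.map Θ) = P D)
    (hPdcons : ∀ D : Set Ψ, MeasurableSet D →
      ∀ᵐ θ ∂(P.map Θ).restrict D, Pd θ (Θ ⁻¹' D) = 1)
    {D : Set Ω} (hD : MeasurableSet D) :
    P[D.indicator (fun _ => (1 : ℝ)) | MeasurableSpace.comap Θ mΨ]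
      =ᵐ[P] fun ω => (Pd (Θ ω) D).toReal := by
  have hm : MeasurableSpace.comap Θ mΨ ≤ ‹MeasurableSpace Ω› := hΘ.comap_le
  haveI : SigmaFinite (P.trim hm) := inferInstance
  have hFmeas : Measurable fun θ => Pd θ D := hPdmeas D hD
  have hgmeas : Measurable fun ω => (Pd (Θ ω) D).toReal :=
    hFmeas.ennreal_toReal.comp hΘ
  have hgmeas' : Measurable[MeasurableSpace.comap Θ mΨ] fun ω => (Pd (Θ ω) D).toReal :=
    hFmeas.ennreal_toReal.comp (comap_measurable Θ)
  have hgbd : ∀ ω, ‖(Pd (Θ ω) D).toReal‖ ≤ 1 := by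
    intro ω
    haveI := hPdprob (Θ ω)
    rw [Real.norm_eq_abs, abs_of_nonneg ENNReal.toReal_nonneg]
    exact ENNReal.toReal_le_of_le_ofReal one_pos.le (by simpa using prob_le_one)
  have hg_int : Integrable (fun ω => (Pd (Θ ω) D).toReal) P :=
    Integrable.mono' (integrable_const (1 : ℝ)) hgmeas.aestronglyMeasurable
      (Filter.Eventually.of_forall hgbd)
  refine (ae_eq_condExp_of_forall_setIntegral_eq hm
    ((integrable_const (1 : ℝ)).indicator hD)
    (fun s _ _ => hg_int.integrableOn) ?_
    (StronglyMeasurable.aestronglyMeasurable hgmeas'.stronglyMeasurable)).symm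
  rintro _ ⟨A, hA, rfl⟩ -
  have hlhs : ∫ x in Θ ⁻¹' A, (Pd (Θ x) D).toReal ∂P = (P (Θ ⁻¹' A ∩ D)).toReal := by
    have hmc : Measurable fun x => Pd (Θ x) D := hFmeas.comp hΘ
    rw [integral_toReal (hmc.aemeasurable.restrict)
      (Filter.Eventually.of_forall fun x => by
        haveI := hPdprob (Θ x); exact measure_lt_top _ _)]
    congr 1
    rw [← setLIntegral_map hA hFmeas hΘ]
    exact aux_disint_setLIntegral P Θ hΘ Pd hPdprob hPdint hPdcons hA hD
  rw [hlhs, setIntegral_indicator hD, setIntegral_const, smul_eq_mul, mul_one, measureReal_def]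

end Condexp

section ProdIff

variable {Ω Ψ : Type*} [MeasurableSpace Ω] [mΨ : MeasurableSpace Ψ]

lemma aux_condexp_prod_iff (P : Measure Ω) [IsProbabilityMeasure P]
    (Θ : Ω → Ψ) (hΘ : Measurable Θ)
    (Pd : Ψ → Measure Ω) (hPdprob : ∀ θ, IsProbabilityMeasure (Pd θ))
    (hPdmeas : ∀ D : Set Ω, MeasurableSet D → Measurable fun θ => Pd θ D)
    (hPdint : ∀ D : Set Ω, MeasurableSet D → ∫⁻ θ, Pd θ D ∂(P.map Θ) = P D)
    (hPdcons : ∀ D : Set Ψ, MeasurableSet D →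
      ∀ᵐ θ ∂(P.map Θ).restrict D, Pd θ (Θ ⁻¹' D) = 1)
    {n : ℕ} {D : Fin n → Set Ω} (hD : ∀ j, MeasurableSet (D j)) :
    (P[(⋂ j, D j).indicator (fun _ => (1 : ℝ)) | MeasurableSpace.comap Θ mΨ]
        =ᵐ[P] fun ω => ∏ j, (P[(D j).indicator (fun _ => (1 : ℝ)) |
          MeasurableSpace.comap Θ mΨ]) ω)
      ↔ ∀ᵐ θ ∂(P.map Θ), Pd θ (⋂ j, D j) = ∏ j, Pd θ (D j) := by
  have hDi : MeasurableSet (⋂ j, D j) := MeasurableSet.iInter fun j => hD j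
  have h0 := aux_condexp_indicator_disint P Θ hΘ Pd hPdprob hPdmeas hPdint hPdcons hDi
  have hj : ∀ j, P[(D j).indicator (fun _ => (1 : ℝ)) | MeasurableSpace.comap Θ mΨ]
      =ᵐ[P] fun ω => (Pd (Θ ω) (D j)).toReal :=
    fun j => aux_condexp_indicator_disint P Θ hΘ Pd hPdprob hPdmeas hPdint hPdcons (hD j)
  have hprod : (fun ω => ∏ j, (P[(D j).indicator (fun _ => (1 : ℝ)) |
        MeasurableSpace.comap Θ mΨ]) ω)
      =ᵐ[P] fun ω => (∏ j, Pd (Θ ω) (D j)).toReal := by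
    filter_upwards [ae_all_iff.2 hj] with ω hω
    rw [ENNReal.toReal_prod]
    exact Finset.prod_congr rfl fun j _ => hω j
  have hne1 : ∀ ω : Ω, Pd (Θ ω) (⋂ j, D j) ≠ ⊤ := fun ω => by
    haveI := hPdprob (Θ ω); exact measure_ne_top _ _
  have hne2 : ∀ ω : Ω, (∏ j, Pd (Θ ω) (D j)) ≠ ⊤ := fun ω => by
    haveI := hPdprob (Θ ω)
    exact (ENNReal.prod_lt_top fun j _ => measure_lt_top _ _).ne
  have hmeasset : MeasurableSet {θ : Ψ | Pd θ (⋂ j, D j) = ∏ j, Pd θ (D j)} := by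
    have hf : Measurable fun θ => (Pd θ (⋂ j, D j)).toReal := (hPdmeas _ hDi).ennreal_toReal
    have hg : Measurable fun θ => (∏ j, Pd θ (D j)).toReal :=
      (Finset.measurable_prod _ fun j _ => hPdmeas _ (hD j)).ennreal_toReal
    have hset : {θ : Ψ | Pd θ (⋂ j, D j) = ∏ j, Pd θ (D j)}
        = {θ | (Pd θ (⋂ j, D j)).toReal = (∏ j, Pd θ (D j)).toReal} := by
      ext θ
      haveI := hPdprob θ
      simp only [Set.mem_setOf_eq]
      exact ⟨fun h => by rw [h], fun h =>
        (ENNReal.toReal_eq_toReal_iff' (measure_ne_top _ _)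
          ((ENNReal.prod_lt_top fun j _ => measure_lt_top _ _).ne)).1 h⟩
    rw [hset]
    exact measurableSet_eq_fun hf hg
  constructor
  · intro hcond
    have key : ∀ᵐ ω ∂P, Pd (Θ ω) (⋂ j, D j) = ∏ j, Pd (Θ ω) (D j) := by
      filter_upwards [h0.symm.trans (hcond.trans hprod)] with ω hω
      exact (ENNReal.toReal_eq_toReal_iff' (hne1 ω) (hne2 ω)).1 hω
    exact (ae_map_iff hΘ.aemeasurable hmeasset).2 key
  · intro hae
    have key : ∀ᵐ ω ∂P, Pd (Θ ω) (⋂ j, D j) = ∏ j, Pd (Θ ω) (D j) :=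
      ae_of_ae_map hΘ.aemeasurable hae
    refine h0.trans (Filter.EventuallyEq.trans ?_ hprod.symm)
    filter_upwards [key] with ω hω
    rw [hω]

end ProdIff


/-- For `I` countable and `T` countably generated, `{X_i}` is
`P`-conditionally i.i.d. given `Θ` iff for `P_Θ`-almost all `θ` the family `{X_i}`
is i.i.d. under `P_θ`. -/
theorem condIID_iff_ae_iid
    {Ω Y Ψ I : Type*} [MeasurableSpace Ω] [mY : MeasurableSpace Y] [mΨ : MeasurableSpace Ψ]
    [MeasurableSpace.CountablyGenerated Y] [Countable I]
    (P : Measure Ω) [IsProbabilityMeasure P]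
    (Θ : Ω → Ψ) (hΘ : Measurable Θ)
    (Pd : Ψ → Measure Ω) (hPdprob : ∀ θ, IsProbabilityMeasure (Pd θ))
    (hPdmeas : ∀ D : Set Ω, MeasurableSet D → Measurable fun θ => Pd θ D)
    (hPdint : ∀ D : Set Ω, MeasurableSet D → ∫⁻ θ, Pd θ D ∂(P.map Θ) = P D)
    (hPdcons : ∀ D : Set Ψ, MeasurableSet D →
      ∀ᵐ θ ∂(P.map Θ).restrict D, Pd θ (Θ ⁻¹' D) = 1)
    (X : I → Ω → Y) (hX : ∀ i, Measurable (X i)) :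
    (CondIndepFam mY P (MeasurableSpace.comap Θ mΨ) X ∧
        ∀ i j : I, ∀ F : Set Ω, MeasurableSet[MeasurableSpace.comap Θ mΨ] F →
          ∀ B : Set Y, MeasurableSet B → P (F ∩ X i ⁻¹' B) = P (F ∩ X j ⁻¹' B)) ↔
      (∀ᵐ θ ∂(P.map Θ), ProbabilityTheory.iIndepFun (m := fun _ : I => mY) X (Pd θ) ∧
        ∀ i j : I, (Pd θ).map (X i) = (Pd θ).map (X j)) := by
  classical
  -- the countable π-system generating `mY`
  set G : Set (Set Y) := MeasurableSpace.countableGeneratingSet Y with hG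
  set πS : Set (Set Y) := generatePiSystem G with hπS
  have hπS_count : πS.Countable :=
    aux_countable_generatePiSystem MeasurableSpace.countable_countableGeneratingSet
  have hπS_pi : IsPiSystem πS := isPiSystem_generatePiSystem G
  have hπS_gen : MeasurableSpace.generateFrom πS = mY := by
    rw [hπS, generateFrom_generatePiSystem_eq, hG,
      MeasurableSpace.generateFrom_countableGeneratingSet]
  have hπS_meas : ∀ s ∈ πS, MeasurableSet s := fun s hs => by
    rw [← hπS_gen]; exact MeasurableSpace.measurableSet_generateFrom hs
  haveI : Countable ↥πS := hπS_count.to_subtype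
  haveI : IsProbabilityMeasure (P.map Θ) := Measure.isProbabilityMeasure_map hΘ.aemeasurable
  -- the encoding of finitely-supported choices from the π-system
  let Bof : (Σ s : Finset I, ({i // i ∈ s} → ↥πS)) → I → Set Y := fun p i =>
    if h : i ∈ p.1 then ((p.2 ⟨i, h⟩ : Set Y)) else Set.univ
  have hBofmem : ∀ p i, i ∈ p.1 → Bof p i ∈ πS := fun p i hi => by
    simp only [Bof, dif_pos hi]; exact (p.2 ⟨i, hi⟩).2
  have hBofmeas : ∀ p i, MeasurableSet (Bof p i) := fun p i => by
    by_cases h : i ∈ p.1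
    · exact hπS_meas _ (hBofmem p i h)
    · simp only [Bof, dif_neg h]; exact MeasurableSet.univ
  constructor
  · rintro ⟨hCI, hID⟩
    -- Part 1: a.e. independence on the π-system, one constraint at a time
    have hIndepOne : ∀ p : Σ s : Finset I, ({i // i ∈ s} → ↥πS),
        ∀ᵐ θ ∂(P.map Θ),
          Pd θ (⋂ i ∈ p.1, X i ⁻¹' Bof p i) = ∏ i ∈ p.1, Pd θ (X i ⁻¹' Bof p i) := by
      rintro ⟨s, g⟩
      set p : Σ s : Finset I, ({i // i ∈ s} → ↥πS) := ⟨s, g⟩ with hp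
      let e := s.equivFin
      let idx : Fin s.card → I := fun j => (e.symm j : I)
      have hinj : Function.Injective idx := fun a b hab =>
        e.symm.injective (Subtype.ext hab)
      have hE : ∀ j, MeasurableSet[MeasurableSpace.comap (X (idx j)) mY]
          (X (idx j) ⁻¹' Bof p (idx j)) :=
        fun j => ⟨Bof p (idx j), hBofmeas p (idx j), rfl⟩
      have hcond := hCI s.card idx hinj (fun j => X (idx j) ⁻¹' Bof p (idx j)) hE
      have hae := (aux_condexp_prod_iff P Θ hΘ Pd hPdprob hPdmeas hPdint hPdcons
        (fun j => (hX (idx j)) (hBofmeas p (idx j)))).1 hcond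
      have hset : (⋂ j, X (idx j) ⁻¹' Bof p (idx j)) = ⋂ i ∈ s, X i ⁻¹' Bof p i := by
        ext x
        simp only [Set.mem_iInter, Set.mem_preimage]
        constructor
        · intro hx i hi
          have := hx (e ⟨i, hi⟩)
          simpa only [idx, Equiv.symm_apply_apply] using this
        · intro hx j
          exact hx (idx j) (e.symm j).2
      have hprodeq : ∀ θ, (∏ j, Pd θ (X (idx j) ⁻¹' Bof p (idx j)))
          = ∏ i ∈ s, Pd θ (X i ⁻¹' Bof p i) := by
        intro θ
        rw [← Finset.prod_coe_sort s (fun i => Pd θ (X i ⁻¹' Bof p i))]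
        exact Fintype.prod_equiv e.symm _ _ (fun j => rfl)
      filter_upwards [hae] with θ hθ
      rw [← hset, ← hprodeq θ]
      exact hθ
    have hIndepAll := ae_all_iff.2 hIndepOne
    -- Part 2: a.e. equal one-dimensional distributions on the π-system
    have hIDOne : ∀ q : I × I × ↥πS,
        ∀ᵐ θ ∂(P.map Θ),
          Pd θ (X q.1 ⁻¹' (q.2.2 : Set Y)) = Pd θ (X q.2.1 ⁻¹' (q.2.2 : Set Y)) := by
      rintro ⟨i, j, B, hB⟩
      have hBm : MeasurableSet (B : Set Y) := hπS_meas _ hB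
      refine ae_eq_of_forall_setLIntegral_eq_of_sigmaFinite
        (hPdmeas _ ((hX i) hBm)) (hPdmeas _ ((hX j) hBm)) ?_
      intro A hA _
      rw [aux_disint_setLIntegral P Θ hΘ Pd hPdprob hPdint hPdcons hA ((hX i) hBm),
        aux_disint_setLIntegral P Θ hΘ Pd hPdprob hPdint hPdcons hA ((hX j) hBm)]
      exact hID i j (Θ ⁻¹' A) ⟨A, hA, rfl⟩ B hBm
    have hIDAll := ae_all_iff.2 hIDOne
    filter_upwards [hIndepAll, hIDAll] with θ h1 h2
    haveI := hPdprob θ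
    constructor
    · -- independence
      rw [ProbabilityTheory.iIndepFun_iff_iIndep]
      refine ProbabilityTheory.iIndepSets.iIndep (fun i => (hX i).comap_le)
        (fun i => {t | ∃ u ∈ πS, X i ⁻¹' u = t}) (fun i => hπS_pi.comap (X i))
        (fun i => ?_) ?_
      · rw [← hπS_gen]
        exact MeasurableSpace.comap_generateFrom
      · rw [ProbabilityTheory.iIndepSets_iff]
        intro s f hf
        choose t ht hXt using hf
        set g : {i // i ∈ s} → ↥πS := fun i => ⟨t i i.2, ht i i.2⟩ with hg
        have hBf : ∀ i (hi : i ∈ s), X i ⁻¹' (Bof ⟨s, g⟩ i) = f i := fun i hi => by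
          simp only [Bof, dif_pos hi, hg]
          exact hXt i hi
        calc Pd θ (⋂ i ∈ s, f i)
            = Pd θ (⋂ i ∈ s, X i ⁻¹' Bof ⟨s, g⟩ i) := by
              congr 1
              exact (Set.iInter₂_congr hBf).symm
          _ = ∏ i ∈ s, Pd θ (X i ⁻¹' Bof ⟨s, g⟩ i) := h1 ⟨s, g⟩
          _ = ∏ i ∈ s, Pd θ (f i) := Finset.prod_congr rfl fun i hi => by rw [hBf i hi]
    · -- identical distributions
      intro i j
      haveI : IsProbabilityMeasure ((Pd θ).map (X i)) :=
        Measure.isProbabilityMeasure_map (hX i).aemeasurable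
      haveI : IsProbabilityMeasure ((Pd θ).map (X j)) :=
        Measure.isProbabilityMeasure_map (hX j).aemeasurable
      refine ext_of_generate_finite πS hπS_gen.symm hπS_pi (fun u hu => ?_) (by simp)
      rw [Measure.map_apply (hX i) (hπS_meas u hu), Measure.map_apply (hX j) (hπS_meas u hu)]
      exact h2 (i, j, ⟨u, hu⟩)
  · intro h
    constructor
    · -- conditional independence
      intro n idx hinj E hE
      have hE' : ∀ j, ∃ Bj : Set Y, MeasurableSet Bj ∧ X (idx j) ⁻¹' Bj = E j :=
        fun j => MeasurableSpace.measurableSet_comap.1 (hE j)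
      choose B hBmeas hBeq using hE'
      have hD : ∀ j, MeasurableSet (E j) := fun j => by
        rw [← hBeq j]; exact (hX (idx j)) (hBmeas j)
      refine (aux_condexp_prod_iff P Θ hΘ Pd hPdprob hPdmeas hPdint hPdcons hD).2 ?_
      filter_upwards [h] with θ hθ
      obtain ⟨hind, -⟩ := hθ
      haveI := hPdprob θ
      set S : Finset I := Finset.image idx Finset.univ with hS
      set sets : I → Set Y := fun i =>
        if hx : ∃ j, idx j = i then B hx.choose else Set.univ with hsets
      have hsets_idx : ∀ j, sets (idx j) = B j := by
        intro j
        have hx : ∃ j', idx j' = idx j := ⟨j, rfl⟩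
        simp only [hsets, dif_pos hx]
        exact congrArg B (hinj hx.choose_spec)
      have hsetsm : ∀ i, i ∈ S → MeasurableSet (sets i) := by
        intro i _
        simp only [hsets]
        split_ifs with hx
        · exact hBmeas _
        · exact MeasurableSet.univ
      have hkey := hind.measure_inter_preimage_eq_mul S hsetsm
      have h1 : (⋂ i ∈ S, X i ⁻¹' sets i) = ⋂ j, E j := by
        ext x
        simp only [Set.mem_iInter, Set.mem_preimage, hS, Finset.mem_image,
          Finset.mem_univ, true_and]
        constructor
        · intro hx j
          have := hx (idx j) ⟨j, rfl⟩
          rw [hsets_idx j] at this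
          rw [← hBeq j]
          exact this
        · rintro hx i ⟨j, rfl⟩
          rw [hsets_idx j]
          have := hx j
          rw [← hBeq j] at this
          exact this
      have h2' : ∏ i ∈ S, Pd θ (X i ⁻¹' sets i) = ∏ j, Pd θ (E j) := by
        rw [hS, Finset.prod_image (fun a _ b _ hab => hinj hab)]
        exact Finset.prod_congr rfl fun j _ => by rw [hsets_idx j, hBeq j]
      rw [← h1, ← h2']
      exact hkey
    · -- identical distributions
      intro i j F hF B hB
      obtain ⟨A, hA, rfl⟩ := hF
      have hXiB : MeasurableSet (X i ⁻¹' B) := (hX i) hB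
      have hXjB : MeasurableSet (X j ⁻¹' B) := (hX j) hB
      rw [← aux_disint_setLIntegral P Θ hΘ Pd hPdprob hPdint hPdcons hA hXiB,
        ← aux_disint_setLIntegral P Θ hΘ Pd hPdprob hPdint hPdcons hA hXjB]
      refine lintegral_congr_ae (ae_restrict_of_ae ?_)
      filter_upwards [h] with θ hθ
      obtain ⟨-, hid⟩ := hθ
      rw [← Measure.map_apply (hX i) hB, ← Measure.map_apply (hX j) hB, hid i j]
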